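/- Let S > 0, T = 1, K ≥ 1. Then at least one eigenvalue of the Jacobian of the plant–soil system at Ē₃ = (S/(K+S+1), S/(K+S+1), 1/(K+S+1), 1/(K+S+1)) has positive real part; hence Ē₃ is linearly unstable. -/

import Mathlib

open Polynomial

/-- Jacobian of the plant-soil model with T = 1 evaluated at the symmetric
coexistence equilibrium Ē₃, over ℂ. -/
noncomputable def JE3C (K S : ℝ) : Matrix (Fin 4) (Fin 4) ℂ :=
  let b : ℂ := (S : ℂ) / ((K : ℂ) + S + 1)
  let t : ℂ := 1 / ((K : ℂ) + S + 1)
  !![1 - b - t - (K : ℂ) * t, -b, -b, -(K : ℂ) * b;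
     -b, 1 - b - (K : ℂ) * t - t, -(K : ℂ) * b, -b;
     1, 0, -(S : ℂ), 0;
     0, 1, 0, -(S : ℂ)]

set_option maxHeartbeats 1000000 in
private lemma det4 {R : Type*} [CommRing R] (A : Matrix (Fin 4) (Fin 4) R) : A.det =
    A 0 0*A 1 1*A 2 2*A 3 3 - A 0 0*A 1 1*A 2 3*A 3 2 - A 0 0*A 1 2*A 2 1*A 3 3 + A 0 0*A 1 2*A 2 3*A 3 1 + A 0 0*A 1 3*A 2 1*A 3 2 - A 0 0*A 1 3*A 2 2*A 3 1 - A 0 1*A 1 0*A 2 2*A 3 3 + A 0 1*A 1 0*A 2 3*A 3 2 + A 0 1*A 1 2*A 2 0*A 3 3 - A 0 1*A 1 2*A 2 3*A 3 0 - A 0 1*A 1 3*A 2 0*A 3 2 + A 0 1*A 1 3*A 2 2*A 3 0 + A 0 2*A 1 0*A 2 1*A 3 3 - A 0 2*A 1 0*A 2 3*A 3 1 - A 0 2*A 1 1*A 2 0*A 3 3 + A 0 2*A 1 1*A 2 3*A 3 0 + A 0 2*A 1 3*A 2 0*A 3 1 - A 0 2*A 1 3*A 2 1*A 3 0 - A 0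 3*A 1 0*A 2 1*A 3 2 + A 0 3*A 1 0*A 2 2*A 3 1 + A 0 3*A 1 1*A 2 0*A 3 2 - A 0 3*A 1 1*A 2 2*A 3 0 - A 0 3*A 1 2*A 2 0*A 3 1 + A 0 3*A 1 2*A 2 1*A 3 0 := by
  rw [Matrix.det_succ_row_zero]
  simp only [Fin.sum_univ_succ, Fin.sum_univ_zero, Matrix.det_fin_three, Matrix.submatrix_apply]
  norm_num [Fin.succAbove, Fin.lt_def, Fin.succ, Fin.castSucc, Fin.castAdd, Fin.castLE]
  simp only [show ((⟨2, by omega⟩:Fin 4)) = 2 from rfl, show ((⟨3, by omega⟩:Fin 4)) = 3 from rfl]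
  ring

set_option maxHeartbeats 1000000 in
set_option maxRecDepth 4000 in
theorem E3_unstable_for_K_ge_one (K S : ℝ) (hS : 0 < S) (hK : 1 ≤ K) :
    ∃ μ ∈ (JE3C K S).charpoly.roots, 0 < μ.re := by
  have h1 : 1 < (K+S)^2 := by nlinarith
  have h2 : 0 < (S+4)*(K+S)^2 - 4 := by nlinarith
  set A : ℝ := S * ((S+4)*(K+S)^2 - 4) with hA
  have hApos : 0 < A := by rw [hA]; exact mul_pos hS h2
  set r : ℝ := Real.sqrt A with hrdef
  have hr2 : r^2 = A := Real.sq_sqrt hApos.le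
  have hrpos : S*(K+S) < r := by
    rw [hrdef]
    rw [show S*(K+S) = Real.sqrt ((S*(K+S))^2) from (Real.sqrt_sq (by positivity)).symm]
    apply Real.sqrt_lt_sqrt (by positivity)
    rw [hA]; nlinarith [mul_pos hS (show (0:ℝ) < (K+S)^2-1 by nlinarith)]
  set μr : ℝ := (-(S*(K+S)) + r) / (2*(K+S+1)) with hμdef
  have hμpos : 0 < μr := div_pos (by linarith) (by nlinarith)
  have hreal : (K+S+1)*μr^2 + S*(K+S)*μr + S*(1-K-S) = 0 := by
    rw [hμdef]
    field_simp
    ring_nf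
    nlinarith [hr2, hA]
  have hDC : ((K:ℂ)+S+1) ≠ 0 := by
    intro h
    have := congrArg Complex.re h
    push_cast at this
    simp at this
    nlinarith
  have hC2 : ((K:ℂ)+S+1)*(μr:ℂ)^2 + (S:ℂ)*((K:ℂ)+S)*(μr:ℂ) + (S:ℂ)*(1-(K:ℂ)-S) = 0 := by
    exact_mod_cast congrArg (Complex.ofReal) hreal
  refine ⟨(μr:ℂ), ?_, by simpa using hμpos⟩
  rw [Polynomial.mem_roots ((Matrix.charpoly_monic _).ne_zero)]
  rw [Polynomial.IsRoot.def, Matrix.charpoly, ← Polynomial.coe_evalRingHom, RingHom.map_det]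
  set D : ℂ := (K:ℂ)+S+1 with hD
  set b : ℂ := (S:ℂ)/D with hb
  set t : ℂ := 1/D with ht
  set μ : ℂ := (μr:ℂ) with hμ
  have hM : (evalRingHom μ).mapMatrix (JE3C K S).charmatrix =
      !![μ - (1 - b - t - (K:ℂ)*t), b, b, (K:ℂ)*b;
         b, μ - (1 - b - (K:ℂ)*t - t), (K:ℂ)*b, b;
         -1, 0, μ + S, 0;
         0, -1, 0, μ + S] := by
    ext i j
    fin_cases i <;> fin_cases j <;>
      simp [JE3C, Matrix.charmatrix_apply, Matrix.diagonal, hb, ht, hD]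
  rw [hM, det4]
  simp only [Matrix.cons_val', Matrix.cons_val_zero, Matrix.cons_val_one, Matrix.head_cons,
    Matrix.empty_val', Matrix.cons_val_fin_one, Matrix.head_fin_const, Matrix.cons_val_two,
    Matrix.tail_cons, Matrix.cons_val_three, Matrix.of_apply]
  rw [hb, ht, hμ]
  field_simp
  linear_combination (((K:ℂ)+S+1)*(μr:ℂ)^2 + (S:ℂ)*((K:ℂ)+S+2)*(μr:ℂ) + (S:ℂ)*((K:ℂ)+S+1)) * hC2
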